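/- Let (S, L) be a greedoid language. Then the family F = {α̃ : α ∈ L} of letter-sets of feasible words, together with the ground set S, forms a greedoid: ∅ ∈ F, and for all X, Y ∈ F with |X| < |Y| there exists y ∈ Y \ X such that X ∪ {y} ∈ F. -/

import Mathlib

/-- Let `(S, L)` be a greedoid language (the finite ground set `S` is the
finite type `α`). Then the family `F = {α̃ : α ∈ L}` of letter-sets of feasible words,
together with the ground set `S`, forms a greedoid: `∅ ∈ F`, and for all `X, Y ∈ F` with
`|X| < |Y|` there exists `y ∈ Y \ X` such that `X ∪ {y} ∈ F`. -/
theorem greedoid_language_letter_sets_form_greedoid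
    {α : Type*} [Fintype α] [DecidableEq α]
    (L : Set (List α))
    -- `L` is a simple language: all words consist of pairwise distinct letters
    (hsimple : ∀ v ∈ L, List.Nodup v)
    -- (i) the empty word belongs to `L`
    (hempty : ([] : List α) ∈ L)
    -- (ii) `L` is closed under taking prefixes
    (hprefix : ∀ a b : List α, a ++ b ∈ L → a ∈ L)
    -- (iii) the exchange property
    (hexchange : ∀ a ∈ L, ∀ b ∈ L, b.length < a.length → ∃ x ∈ a, b ++ [x] ∈ L) :
    (∅ : Finset α) ∈ {s : Finset α | ∃ a ∈ L, a.toFinset = s} ∧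
    ∀ X ∈ {s : Finset α | ∃ a ∈ L, a.toFinset = s},
      ∀ Y ∈ {s : Finset α | ∃ a ∈ L, a.toFinset = s},
        X.card < Y.card →
          ∃ y ∈ Y \ X, insert y X ∈ {s : Finset α | ∃ a ∈ L, a.toFinset = s} := by
  constructor
  · exact ⟨[], hempty, rfl⟩
  · rintro X ⟨a, ha, rfl⟩ Y ⟨b, hb, rfl⟩ hcard
    rw [List.toFinset_card_of_nodup (hsimple a ha),
        List.toFinset_card_of_nodup (hsimple b hb)] at hcard
    obtain ⟨x, hxb, hax⟩ := hexchange b hb a ha hcard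
    have hnd := hsimple _ hax
    have hxa : x ∉ a := by
      intro hxa
      exact (List.disjoint_of_nodup_append hnd) hxa (List.mem_singleton_self x)
    refine ⟨x, ?_, ⟨a ++ [x], hax, ?_⟩⟩
    · simp [hxb, hxa]
    · simp
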